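/- Let A, B be positive definite matrices with K·A ≥ B ≥ k·A for constants 0 < k < K, and let ν ∈ [0,1]. Then Δ_ν(k,K)·A ≥ A∇_ν B − A#_ν B ≥ δ_ν(k,K)·A in the Loewner order, where Δ_ν(k,K) = max of f_ν on [k,K] and δ_ν(k,K) = min of f_ν on [k,K] with f_ν(t) = 1 − ν + νt − t^ν. -/

import Mathlib

set_option maxHeartbeats 1000000

open Matrix ComplexOrder

/-- Real power of a Hermitian matrix via the spectral theorem (functional calculus);
junk value `0` for non-Hermitian matrices. -/
noncomputable def Matrix.hrpow {n : ℕ} (A : Matrix (Fin n) (Fin n) ℂ) (r : ℝ) :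
    Matrix (Fin n) (Fin n) ℂ :=
  if h : A.IsHermitian then
    (h.eigenvectorUnitary : Matrix (Fin n) (Fin n) ℂ) *
      Matrix.diagonal (fun i => ((h.eigenvalues i ^ r : ℝ) : ℂ)) *
      (h.eigenvectorUnitary : Matrix (Fin n) (Fin n) ℂ)ᴴ
  else 0

/-- Weighted geometric mean `A #_ν B` of positive definite matrices:
`A^{1/2} (A^{-1/2} B A^{-1/2})^ν A^{1/2}`. -/
noncomputable def Matrix.gmean {n : ℕ} (A B : Matrix (Fin n) (Fin n) ℂ) (ν : ℝ) :
    Matrix (Fin n) (Fin n) ℂ :=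
  A.hrpow (1/2) * ((A.hrpow (-(1/2)) * B * A.hrpow (-(1/2))).hrpow ν) * A.hrpow (1/2)

/-- Quadratic weighted geometric mean `X ⓢ_ν Y = X* (|Y X⁻¹|²)^ν X`. -/
noncomputable def Matrix.qgmean {n : ℕ} (X Y : Matrix (Fin n) (Fin n) ℂ) (ν : ℝ) :
    Matrix (Fin n) (Fin n) ℂ :=
  Xᴴ * ((Y * X⁻¹)ᴴ * (Y * X⁻¹)).hrpow ν * X

section Scalar

lemma youngA {ν s t : ℝ} (hν0 : 0 ≤ ν) (hν1 : ν ≤ 1) (hs : 0 ≤ s) (ht : 0 ≤ t) :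
    t ^ ν * s ^ (1 - ν) ≤ ν * t + (1 - ν) * s := by
  simpa using Real.geom_mean_le_arith_mean2_weighted hν0 (by linarith) ht hs (by ring)

/-- decreasing: 0 < s ≤ t ≤ 1 ⇒ ν(t - s) ≤ t^ν - s^ν -/
lemma lemA {ν s t : ℝ} (hν0 : 0 ≤ ν) (hν1 : ν ≤ 1) (hs : 0 < s) (hst : s ≤ t) (ht1 : t ≤ 1) :
    ν * (t - s) ≤ t ^ ν - s ^ ν := by
  have ht : 0 < t := hs.trans_le hst
  have h1 : s ^ ν * t ^ (1 - ν) ≤ ν * s + (1 - ν) * t := youngA hν0 hν1 ht.le hs.le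
  have h2 : s ^ ν ≤ (ν * s + (1 - ν) * t) * t ^ (ν - 1) := by
    have := mul_le_mul_of_nonneg_right h1 (Real.rpow_nonneg ht.le (ν - 1))
    calc s ^ ν = s ^ ν * t ^ (1 - ν) * t ^ (ν - 1) := by
          rw [mul_assoc, ← Real.rpow_add ht]; norm_num
      _ ≤ (ν * s + (1 - ν) * t) * t ^ (ν - 1) := this
  have htν : t ^ ν = t * t ^ (ν - 1) := by
    have h := Real.rpow_add ht 1 (ν - 1)
    rw [Real.rpow_one] at h
    rw [show ν = 1 + (ν - 1) by ring, h]; norm_num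
  have h3 : t ^ ν - s ^ ν ≥ ν * t ^ (ν - 1) * (t - s) := by
    have : t ^ ν - (ν * s + (1 - ν) * t) * t ^ (ν - 1) = ν * t ^ (ν - 1) * (t - s) := by
      rw [htν]; ring
    linarith [h2]
  have ht1' : 1 ≤ t ^ (ν - 1) :=
    Real.one_le_rpow_of_pos_of_le_one_of_nonpos ht ht1 (by linarith)
  nlinarith [mul_nonneg hν0 (sub_nonneg.2 hst)]

/-- increasing: 1 ≤ s ≤ t ⇒ t^ν - s^ν ≤ ν(t - s) -/
lemma lemB {ν s t : ℝ} (hν0 : 0 ≤ ν) (hν1 : ν ≤ 1) (hs : 1 ≤ s) (hst : s ≤ t) :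
    t ^ ν - s ^ ν ≤ ν * (t - s) := by
  have hs0 : (0:ℝ) < s := by linarith
  have ht0 : (0:ℝ) < t := by linarith
  have h1 : t ^ ν * s ^ (1 - ν) ≤ ν * t + (1 - ν) * s := youngA hν0 hν1 hs0.le ht0.le
  have h2 : t ^ ν ≤ (ν * t + (1 - ν) * s) * s ^ (ν - 1) := by
    have := mul_le_mul_of_nonneg_right h1 (Real.rpow_nonneg hs0.le (ν - 1))
    calc t ^ ν = t ^ ν * s ^ (1 - ν) * s ^ (ν - 1) := by
          rw [mul_assoc, ← Real.rpow_add hs0]; norm_num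
      _ ≤ (ν * t + (1 - ν) * s) * s ^ (ν - 1) := this
  have hsν : s ^ ν = s * s ^ (ν - 1) := by
    have h := Real.rpow_add hs0 1 (ν - 1)
    rw [Real.rpow_one] at h
    rw [show ν = 1 + (ν - 1) by ring, h]; norm_num
  have h3 : t ^ ν - s ^ ν ≤ ν * s ^ (ν - 1) * (t - s) := by
    have : (ν * t + (1 - ν) * s) * s ^ (ν - 1) - s ^ ν = ν * s ^ (ν - 1) * (t - s) := by
      rw [hsν]; ring
    linarith [h2]
  have hs1' : s ^ (ν - 1) ≤ 1 := Real.rpow_le_one_of_one_le_of_nonpos hs (by linarith)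
  nlinarith [mul_nonneg hν0 (sub_nonneg.2 hst)]

/-- Young: t^ν ≤ 1 - ν + ν t -/
lemma lemC {ν t : ℝ} (hν0 : 0 ≤ ν) (hν1 : ν ≤ 1) (ht : 0 ≤ t) :
    t ^ ν ≤ 1 - ν + ν * t := by
  have h := youngA hν0 hν1 zero_le_one ht
  rw [Real.one_rpow, mul_one, mul_one] at h
  linarith

end Scalar

section MatrixLemmas

variable {n : ℕ} {A : Matrix (Fin n) (Fin n) ℂ}

lemma Matrix.hrpow_eq (h : A.IsHermitian) (r : ℝ) :
    A.hrpow r = (h.eigenvectorUnitary : Matrix (Fin n) (Fin n) ℂ) *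
      Matrix.diagonal (fun i => ((h.eigenvalues i ^ r : ℝ) : ℂ)) *
      (h.eigenvectorUnitary : Matrix (Fin n) (Fin n) ℂ)ᴴ := by
  rw [Matrix.hrpow, dif_pos h]

lemma Matrix.hrpow_isHermitian (h : A.IsHermitian) (r : ℝ) :
    (A.hrpow r).IsHermitian := by
  rw [Matrix.hrpow_eq h r, ← Matrix.conjTranspose_conjTranspose
    ((h.eigenvectorUnitary : Matrix (Fin n) (Fin n) ℂ))]
  exact Matrix.isHermitian_mul_mul_conjTranspose _
    (Matrix.isHermitian_diagonal_iff.mpr fun i => Complex.conj_ofReal _)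

lemma Matrix.hrpow_mul_hrpow (hA : A.PosDef) (r s : ℝ) :
    A.hrpow r * A.hrpow s = A.hrpow (r + s) := by
  have h := hA.isHermitian
  have hU : (h.eigenvectorUnitary : Matrix (Fin n) (Fin n) ℂ)ᴴ *
      (h.eigenvectorUnitary : Matrix (Fin n) (Fin n) ℂ) = 1 := by
    simpa [Matrix.star_eq_conjTranspose] using
      Matrix.mem_unitaryGroup_iff'.mp h.eigenvectorUnitary.2
  rw [Matrix.hrpow_eq h r, Matrix.hrpow_eq h s, Matrix.hrpow_eq h (r + s)]
  have key : ∀ X : Matrix (Fin n) (Fin n) ℂ,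
      (h.eigenvectorUnitary : Matrix (Fin n) (Fin n) ℂ)ᴴ *
        ((h.eigenvectorUnitary : Matrix (Fin n) (Fin n) ℂ) * X) = X := by
    intro X; rw [← mul_assoc, hU, one_mul]
  simp only [mul_assoc]
  rw [key, ← mul_assoc (Matrix.diagonal _), Matrix.diagonal_mul_diagonal]
  have : (fun i => ((h.eigenvalues i ^ r : ℝ) : ℂ) * ((h.eigenvalues i ^ s : ℝ) : ℂ))
      = fun i => ((h.eigenvalues i ^ (r + s) : ℝ) : ℂ) := by
    funext i
    rw [← Complex.ofReal_mul, ← Real.rpow_add (hA.eigenvalues_pos i)]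
  rw [this]

lemma Matrix.hrpow_zero (hA : A.PosDef) : A.hrpow 0 = 1 := by
  have h := hA.isHermitian
  have hU : (h.eigenvectorUnitary : Matrix (Fin n) (Fin n) ℂ) *
      (h.eigenvectorUnitary : Matrix (Fin n) (Fin n) ℂ)ᴴ = 1 := by
    simpa [Matrix.star_eq_conjTranspose] using
      Matrix.mem_unitaryGroup_iff.mp h.eigenvectorUnitary.2
  rw [Matrix.hrpow_eq h 0]
  simp only [Real.rpow_zero, Complex.ofReal_one, Matrix.diagonal_one, mul_one, hU]

lemma Matrix.hrpow_one (hA : A.PosDef) : A.hrpow 1 = A := by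
  have h := hA.isHermitian
  rw [Matrix.hrpow_eq h 1]
  simp only [Real.rpow_one]
  rw [show Matrix.diagonal (fun i => ((h.eigenvalues i : ℝ) : ℂ))
      = Matrix.diagonal (RCLike.ofReal ∘ h.eigenvalues) from rfl]
  rw [← Matrix.star_eq_conjTranspose]
  exact h.spectral_theorem.symm

lemma conj_lin {n : ℕ} (W W' M N : Matrix (Fin n) (Fin n) ℂ) (z₁ z₂ z₃ : ℂ) :
    W * (z₁ • 1 - (z₂ • (1 : Matrix (Fin n) (Fin n) ℂ) + z₃ • M - N)) * W'
      = z₁ • (W * W') - (z₂ • (W * W') + z₃ • (W * M * W') - W * N * W') := by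
  simp only [Matrix.mul_sub, Matrix.sub_mul, Matrix.mul_add, Matrix.add_mul,
    Matrix.mul_smul, Matrix.smul_mul, mul_one]

end MatrixLemmas

theorem stmt_19 {n : ℕ} (A B : Matrix (Fin n) (Fin n) ℂ)
    (hA : A.PosDef) (hB : B.PosDef) {k K : ℝ} (hk : 0 < k) (hkK : k < K)
    (hKA : (((K : ℝ) : ℂ) • A - B).PosSemidef)
    (hkA : (B - ((k : ℝ) : ℂ) • A).PosSemidef)
    {ν : ℝ} (hν : ν ∈ Set.Icc (0:ℝ) 1) :
    ((if K < 1 then 1 - ν + ν * k - k ^ ν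
      else if k ≤ 1 ∧ 1 ≤ K then
        max (1 - ν + ν * k - k ^ ν) (1 - ν + ν * K - K ^ ν)
      else 1 - ν + ν * K - K ^ ν : ℝ) • A -
      ((((1 - ν : ℝ) : ℂ) • A + ((ν : ℝ) : ℂ) • B) - A.gmean B ν)).PosSemidef ∧
    (((((1 - ν : ℝ) : ℂ) • A + ((ν : ℝ) : ℂ) • B) - A.gmean B ν) -
      (if K < 1 then 1 - ν + ν * K - K ^ ν
       else if k ≤ 1 ∧ 1 ≤ K then 0
       else 1 - ν + ν * k - k ^ ν : ℝ) • A).PosSemidef := by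
  obtain ⟨hν0, hν1⟩ := hν
  set S := A.hrpow (1/2) with hSdef
  set T := A.hrpow (-(1/2)) with hTdef
  have hST : S * T = 1 := by
    rw [hSdef, hTdef, Matrix.hrpow_mul_hrpow hA,
      show (1/2 + -(1/2) : ℝ) = 0 by norm_num, Matrix.hrpow_zero hA]
  have hTS : T * S = 1 := by
    rw [hSdef, hTdef, Matrix.hrpow_mul_hrpow hA,
      show (-(1/2) + 1/2 : ℝ) = 0 by norm_num, Matrix.hrpow_zero hA]
  have hSS : S * S = A := by
    rw [hSdef, Matrix.hrpow_mul_hrpow hA,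
      show (1/2 + 1/2 : ℝ) = 1 by norm_num, Matrix.hrpow_one hA]
  have hSH : S.IsHermitian := Matrix.hrpow_isHermitian hA.isHermitian _
  have hTH : T.IsHermitian := Matrix.hrpow_isHermitian hA.isHermitian _
  set C := T * B * T with hCdef
  have hCH : C.IsHermitian := by
    have h := Matrix.isHermitian_conjTranspose_mul_mul T hB.isHermitian
    rw [hTH.eq] at h
    exact hCdef ▸ h
  set V : Matrix (Fin n) (Fin n) ℂ := (hCH.eigenvectorUnitary : Matrix (Fin n) (Fin n) ℂ)
    with hVdef
  set c : Fin n → ℝ := hCH.eigenvalues with hcdef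
  have hVU : Vᴴ * V = 1 := by
    simpa [Matrix.star_eq_conjTranspose] using
      Matrix.mem_unitaryGroup_iff'.mp hCH.eigenvectorUnitary.2
  have hUV : V * Vᴴ = 1 := by
    simpa [Matrix.star_eq_conjTranspose] using
      Matrix.mem_unitaryGroup_iff.mp hCH.eigenvectorUnitary.2
  have hCspec : C = V * Matrix.diagonal (fun i => ((c i : ℝ) : ℂ)) * Vᴴ := by
    rw [show Matrix.diagonal (fun i => ((c i : ℝ) : ℂ))
      = Matrix.diagonal (RCLike.ofReal ∘ hCH.eigenvalues) from rfl]
    rw [← Matrix.star_eq_conjTranspose]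
    exact hCH.spectral_theorem
  have hCdiag : Vᴴ * C * V = Matrix.diagonal (fun i => ((c i : ℝ) : ℂ)) := by
    rw [show Matrix.diagonal (fun i => ((c i : ℝ) : ℂ))
      = Matrix.diagonal (RCLike.ofReal ∘ hCH.eigenvalues) from rfl]
    rw [← Matrix.star_eq_conjTranspose]
    rw [Matrix.star_eq_conjTranspose]
    conv_lhs => rw [hCspec]
    simp only [Matrix.mul_assoc]
    rw [hVU, mul_one, ← Matrix.mul_assoc, hVU, one_mul]
    rfl
  have hCν : C.hrpow ν = V * Matrix.diagonal (fun i => ((c i ^ ν : ℝ) : ℂ)) * Vᴴ :=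
    Matrix.hrpow_eq hCH ν
  -- T * A * T = 1
  have hTAT : T * A * T = 1 := by
    rw [← hSS, ← mul_assoc, hTS, one_mul, hST]
  -- S * C * S = B
  have hSCS : S * C * S = B := by
    rw [hCdef, ← mul_assoc, ← mul_assoc, hST, one_mul, mul_assoc, hTS, mul_one]
  -- eigenvalue bounds
  have hcK : ∀ i, c i ≤ K := by
    intro i
    have h1 : (T * (((K : ℝ) : ℂ) • A - B) * T).PosSemidef := by
      have := hKA.conjTranspose_mul_mul_same T
      rwa [hTH.eq] at this
    have h2 : T * (((K : ℝ) : ℂ) • A - B) * T = ((K : ℝ) : ℂ) • 1 - C := by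
      rw [Matrix.mul_sub, Matrix.sub_mul, Matrix.mul_smul, Matrix.smul_mul, hTAT, hCdef]
    rw [h2] at h1
    have h3 : (Vᴴ * (((K : ℝ) : ℂ) • 1 - C) * V).PosSemidef :=
      h1.conjTranspose_mul_mul_same V
    have h4 : Vᴴ * (((K : ℝ) : ℂ) • 1 - C) * V
        = Matrix.diagonal (fun i => ((K - c i : ℝ) : ℂ)) := by
      rw [Matrix.mul_sub, Matrix.sub_mul, Matrix.mul_smul, Matrix.smul_mul, mul_one, hVU,
        hCdiag]
      ext i j
      by_cases hij : i = j <;>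
        simp [hij, Matrix.diagonal_apply, Matrix.one_apply, Complex.ofReal_sub]
    rw [h4] at h3
    have := Matrix.posSemidef_diagonal_iff.mp h3 i
    have := Complex.zero_le_real.mp this
    linarith
  have hck : ∀ i, k ≤ c i := by
    intro i
    have h1 : (T * (B - ((k : ℝ) : ℂ) • A) * T).PosSemidef := by
      have := hkA.conjTranspose_mul_mul_same T
      rwa [hTH.eq] at this
    have h2 : T * (B - ((k : ℝ) : ℂ) • A) * T = C - ((k : ℝ) : ℂ) • 1 := by
      rw [Matrix.mul_sub, Matrix.sub_mul, Matrix.mul_smul, Matrix.smul_mul, hTAT, hCdef]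
    rw [h2] at h1
    have h3 : (Vᴴ * (C - ((k : ℝ) : ℂ) • 1) * V).PosSemidef :=
      h1.conjTranspose_mul_mul_same V
    have h4 : Vᴴ * (C - ((k : ℝ) : ℂ) • 1) * V
        = Matrix.diagonal (fun i => ((c i - k : ℝ) : ℂ)) := by
      rw [Matrix.mul_sub, Matrix.sub_mul, Matrix.mul_smul, Matrix.smul_mul, mul_one, hVU,
        hCdiag]
      ext i j
      by_cases hij : i = j <;>
        simp [hij, Matrix.diagonal_apply, Matrix.one_apply, Complex.ofReal_sub]
    rw [h4] at h3
    have := Matrix.posSemidef_diagonal_iff.mp h3 i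
    have := Complex.zero_le_real.mp this
    linarith
  have hc0 : ∀ i, 0 < c i := fun i => hk.trans_le (hck i)
  -- key equality
  have hgm : A.gmean B ν = S * C.hrpow ν * S := rfl
  have keyEq : ∀ d : ℝ, (d : ℝ) • A -
      ((((1 - ν : ℝ) : ℂ) • A + ((ν : ℝ) : ℂ) • B) - A.gmean B ν)
      = S * (V * Matrix.diagonal
          (fun i => ((d - (1 - ν + ν * c i - c i ^ ν) : ℝ) : ℂ)) * Vᴴ) * S := by
    intro d
    have hdiag : Matrix.diagonal (fun i => ((d - (1 - ν + ν * c i - c i ^ ν) : ℝ) : ℂ))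
        = ((d : ℝ) : ℂ) • (1 : Matrix (Fin n) (Fin n) ℂ) -
          ((((1 - ν : ℝ) : ℂ) • 1 + ((ν : ℝ) : ℂ) • Matrix.diagonal (fun i => ((c i : ℝ) : ℂ))
            - Matrix.diagonal (fun i => ((c i ^ ν : ℝ) : ℂ))) ) := by
      ext i j
      by_cases hij : i = j <;>
        simp [hij, Matrix.diagonal_apply, Matrix.one_apply] <;> push_cast <;> ring
    rw [hdiag, conj_lin, hUV, ← hCspec, ← hCν, conj_lin, hSS, hSCS, ← hgm,
      show ((d : ℝ) : ℂ) • A = (d : ℝ) • A from by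
        ext i j; simp [Matrix.smul_apply, Complex.real_smul]]
  have keyPos : ∀ d : ℝ, (∀ i, (1 - ν + ν * c i - c i ^ ν) ≤ d) →
      ((d : ℝ) • A -
        ((((1 - ν : ℝ) : ℂ) • A + ((ν : ℝ) : ℂ) • B) - A.gmean B ν)).PosSemidef := by
    intro d hd
    rw [keyEq d]
    have h1 : (Matrix.diagonal
        (fun i => ((d - (1 - ν + ν * c i - c i ^ ν) : ℝ) : ℂ))).PosSemidef :=
      Matrix.posSemidef_diagonal_iff.mpr fun i =>
        Complex.zero_le_real.mpr (by linarith [hd i])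
    have h2 := h1.mul_mul_conjTranspose_same V
    have h3 := h2.mul_mul_conjTranspose_same S
    rwa [hSH.eq] at h3
  have keyNeg : ∀ d : ℝ, (∀ i, d ≤ (1 - ν + ν * c i - c i ^ ν)) →
      (((((1 - ν : ℝ) : ℂ) • A + ((ν : ℝ) : ℂ) • B) - A.gmean B ν) -
        (d : ℝ) • A).PosSemidef := by
    intro d hd
    have heq : ((((1 - ν : ℝ) : ℂ) • A + ((ν : ℝ) : ℂ) • B) - A.gmean B ν) - (d : ℝ) • A
        = S * (V * Matrix.diagonal
            (fun i => (((1 - ν + ν * c i - c i ^ ν) - d : ℝ) : ℂ)) * Vᴴ) * S := by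
      rw [← neg_sub ((d : ℝ) • A), keyEq d,
        show Matrix.diagonal (fun i => (((1 - ν + ν * c i - c i ^ ν) - d : ℝ) : ℂ))
            = -Matrix.diagonal (fun i => ((d - (1 - ν + ν * c i - c i ^ ν) : ℝ) : ℂ)) from by
          ext i j
          by_cases hij : i = j <;>
            simp [hij, Matrix.diagonal_apply, Matrix.neg_apply] <;> push_cast <;> ring]
      simp only [Matrix.mul_neg, Matrix.neg_mul]
    rw [heq]
    have h1 : (Matrix.diagonal
        (fun i => (((1 - ν + ν * c i - c i ^ ν) - d : ℝ) : ℂ))).PosSemidef :=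
      Matrix.posSemidef_diagonal_iff.mpr fun i =>
        Complex.zero_le_real.mpr (by linarith [hd i])
    have h2 := h1.mul_mul_conjTranspose_same V
    have h3 := h2.mul_mul_conjTranspose_same S
    rwa [hSH.eq] at h3
  constructor
  · -- upper bound
    apply keyPos
    intro i
    split_ifs with h1 h2
    · -- K < 1 : f(c i) ≤ f(k)
      have := lemA hν0 hν1 hk (hck i) ((hcK i).trans h1.le)
      linarith
    · -- k ≤ 1 ≤ K
      rcases le_or_gt (c i) 1 with hci | hci
      · have := lemA hν0 hν1 hk (hck i) hci
        exact le_max_of_le_left (by linarith)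
      · have := lemB hν0 hν1 hci.le (hcK i)
        exact le_max_of_le_right (by linarith)
    · -- 1 < k
      have hK1 : 1 ≤ K := not_lt.mp h1
      have hk1 : 1 ≤ k := by
        by_contra hcon
        push_neg at hcon
        exact h2 ⟨hcon.le, hK1⟩
      have := lemB hν0 hν1 (hk1.trans (hck i)) (hcK i)
      linarith
  · -- lower bound
    apply keyNeg
    intro i
    split_ifs with h1 h2
    · -- K < 1 : f(K) ≤ f(c i)
      have := lemA hν0 hν1 (hc0 i) (hcK i) h1.le
      linarith
    · -- k ≤ 1 ≤ K : 0 ≤ f(c i)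
      have := lemC hν0 hν1 (hc0 i).le
      linarith
    · -- 1 < k : f(k) ≤ f(c i)
      have hK1 : 1 ≤ K := not_lt.mp h1
      have hk1 : 1 ≤ k := by
        by_contra hcon
        push_neg at hcon
        exact h2 ⟨hcon.le, hK1⟩
      have := lemB hν0 hν1 hk1 (hck i)
      linarith
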